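/- Let X be a nonempty finite type, P* : X → ℝ≥0 with Σ_x P*(x) = 1, let γ : X → [0,1], and let p : X → ℝ satisfy 0 < p(x) < 1 for all x. Define the population binary cross-entropy risk R(p) = Σ_x P*(x)·( γ(x)·(−log p(x)) + (1 − γ(x))·(−log(1 − p(x))) ), and R_min = Σ_x P*(x)·( γ(x)·(−log γ(x)) + (1 − γ(x))·(−log(1 − γ(x))) ) (with the convention 0·log 0 = 0). Then Σ_x P*(x)·|p(x) − γ(x)| ≤ (1/√2)·√(R(p) − R_min). -/

import Mathlib

open Finset

lemma Fderiv (a t : ℝ) (ht0 : 0 < t) (ht1 : t < 1) :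
    HasDerivAt (fun t => a*(-Real.log t) + (1-a)*(-Real.log (1-t)) - 2*(t-a)^2)
      ((t - a) * (1 - 2*t)^2 / (t * (1 - t))) t := by
  have h1 : HasDerivAt (fun t : ℝ => a * (-Real.log t)) (a * (-t⁻¹)) t :=
    ((Real.hasDerivAt_log ht0.ne').neg).const_mul a
  have h2 : HasDerivAt (fun t : ℝ => (1-t)) (-1) t := by
    simpa using ((hasDerivAt_id t).const_sub 1)
  have h3 : HasDerivAt (fun t : ℝ => (1-a) * (-Real.log (1-t)))
      ((1-a) * (-(-1/(1-t)))) t :=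
    ((h2.log (by linarith)).neg).const_mul (1-a)
  have h4 : HasDerivAt (fun t : ℝ => 2*(t-a)^2) (2*(2*(t-a))) t := by
    have := (((hasDerivAt_id t).sub_const a).pow 2).const_mul 2
    simpa using this
  have h := (h1.add h3).sub h4
  refine h.congr_deriv ?_
  have h0 : t ≠ 0 := ht0.ne'
  have h1' : (1:ℝ) - t ≠ 0 := by linarith
  field_simp
  ring

lemma G0deriv (t : ℝ) (ht1 : t < 1) :
    HasDerivAt (fun t => -Real.log (1-t) - 2*t^2) ((1 - 2*t)^2 / (1 - t)) t := by
  have h2 : HasDerivAt (fun t : ℝ => (1-t)) (-1) t := by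
    simpa using ((hasDerivAt_id t).const_sub 1)
  have h3 : HasDerivAt (fun t : ℝ => -Real.log (1-t)) (-(-1/(1-t))) t :=
    (h2.log (by linarith)).neg
  have h4 : HasDerivAt (fun t : ℝ => 2*t^2) (2*(2*t)) t := by
    have := ((hasDerivAt_id t).pow 2).const_mul 2
    simpa using this
  have h := h3.sub h4
  refine h.congr_deriv ?_
  have h1' : (1:ℝ) - t ≠ 0 := by linarith
  field_simp
  ring

lemma G1deriv (t : ℝ) (ht0 : 0 < t) :
    HasDerivAt (fun t => -Real.log t - 2*(t-1)^2) (-((1 - 2*t)^2 / t)) t := by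
  have h3 : HasDerivAt (fun t : ℝ => -Real.log t) (-t⁻¹) t :=
    (Real.hasDerivAt_log ht0.ne').neg
  have h4 : HasDerivAt (fun t : ℝ => 2*(t-1)^2) (2*(2*(t-1))) t := by
    have := (((hasDerivAt_id t).sub_const 1).pow 2).const_mul 2
    simpa using this
  have h := h3.sub h4
  refine h.congr_deriv ?_
  have h0 : t ≠ 0 := ht0.ne'
  field_simp
  ring

lemma pinsker (a b : ℝ) (ha0 : 0 ≤ a) (ha1 : a ≤ 1) (hb0 : 0 < b) (hb1 : b < 1) :
    2*(b-a)^2 ≤ (a*(-Real.log b) + (1-a)*(-Real.log (1-b)))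
      - (a*(-Real.log a) + (1-a)*(-Real.log (1-a))) := by
  rcases eq_or_lt_of_le ha0 with h0 | h0
  · -- a = 0
    subst h0
    simp only [zero_mul, sub_zero, zero_add, sub_zero, Real.log_one, neg_zero, mul_zero,
      one_mul]
    have hmono : MonotoneOn (fun t => -Real.log (1-t) - 2*t^2) (Set.Icc 0 b) := by
      apply monotoneOn_of_deriv_nonneg (convex_Icc 0 b)
      · exact fun t ht => (G0deriv t (lt_of_le_of_lt ht.2 hb1)).differentiableAt.continuousAt.continuousWithinAt
      · rw [interior_Icc]
        exact fun t ht => (G0deriv t (ht.2.trans hb1)).differentiableAt.differentiableWithinAt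
      · rw [interior_Icc]
        intro t ht
        rw [(G0deriv t (ht.2.trans hb1)).deriv]
        exact div_nonneg (sq_nonneg _) (by linarith [ht.2.trans hb1])
    have := hmono (Set.left_mem_Icc.2 hb0.le) (Set.right_mem_Icc.2 hb0.le) hb0.le
    norm_num at this
    nlinarith [this]
  rcases eq_or_lt_of_le ha1 with h1 | h1
  · -- a = 1
    subst h1
    simp only [sub_self, zero_mul, add_zero, one_mul, Real.log_one, neg_zero, mul_zero]
    have hanti : AntitoneOn (fun t => -Real.log t - 2*(t-1)^2) (Set.Icc b 1) := by
      apply antitoneOn_of_deriv_nonpos (convex_Icc b 1)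
      · exact fun t ht => (G1deriv t (lt_of_lt_of_le hb0 ht.1)).differentiableAt.continuousAt.continuousWithinAt
      · rw [interior_Icc]
        exact fun t ht => (G1deriv t (hb0.trans ht.1)).differentiableAt.differentiableWithinAt
      · rw [interior_Icc]
        intro t ht
        rw [(G1deriv t (hb0.trans ht.1)).deriv]
        exact neg_nonpos_of_nonneg (div_nonneg (sq_nonneg _) (hb0.trans ht.1).le)
    have := hanti (Set.left_mem_Icc.2 hb1.le) (Set.right_mem_Icc.2 hb1.le) hb1.le
    simp only [Real.log_one] at this
    nlinarith [this]
  · -- 0 < a < 1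
    set F := fun t => a*(-Real.log t) + (1-a)*(-Real.log (1-t)) - 2*(t-a)^2 with hF
    have key : F a ≤ F b := by
      rcases le_total b a with hba | hab
      · have hanti : AntitoneOn F (Set.Icc b a) := by
          apply antitoneOn_of_deriv_nonpos (convex_Icc b a)
          · exact fun t ht => (Fderiv a t (hb0.trans_le ht.1)
              (lt_of_le_of_lt ht.2 h1)).differentiableAt.continuousAt.continuousWithinAt
          · rw [interior_Icc]
            exact fun t ht => (Fderiv a t (hb0.trans ht.1)
              (ht.2.trans h1)).differentiableAt.differentiableWithinAt
          · rw [interior_Icc]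
            intro t ht
            rw [(Fderiv a t (hb0.trans ht.1) (ht.2.trans h1)).deriv]
            apply div_nonpos_of_nonpos_of_nonneg
            · exact mul_nonpos_of_nonpos_of_nonneg (by linarith [ht.2]) (sq_nonneg _)
            · have := hb0.trans ht.1
              have := ht.2.trans h1
              nlinarith
        exact hanti (Set.left_mem_Icc.2 hba) (Set.right_mem_Icc.2 hba) hba
      · have hmono : MonotoneOn F (Set.Icc a b) := by
          apply monotoneOn_of_deriv_nonneg (convex_Icc a b)
          · exact fun t ht => (Fderiv a t (h0.trans_le ht.1)
              (lt_of_le_of_lt ht.2 hb1)).differentiableAt.continuousAt.continuousWithinAt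
          · rw [interior_Icc]
            exact fun t ht => (Fderiv a t (h0.trans ht.1)
              (ht.2.trans hb1)).differentiableAt.differentiableWithinAt
          · rw [interior_Icc]
            intro t ht
            rw [(Fderiv a t (h0.trans ht.1) (ht.2.trans hb1)).deriv]
            apply div_nonneg
            · exact mul_nonneg (by linarith [ht.1]) (sq_nonneg _)
            · have := h0.trans ht.1
              have := ht.2.trans hb1
              nlinarith
        exact hmono (Set.left_mem_Icc.2 hab) (Set.right_mem_Icc.2 hab) hab
    simp only [hF, sub_self] at key
    nlinarith [key]

/-- Lemma 4.2, binary regret bound: for the population binary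
cross-entropy risk `R(p) = Σ_x P*(x)·(γ(x)·(−log p(x)) + (1 − γ(x))·(−log(1 − p(x))))`
and its minimum `R_min = Σ_x P*(x)·(γ(x)·(−log γ(x)) + (1 − γ(x))·(−log(1 − γ(x))))`
(with `0·log 0 = 0`, automatic since `Real.log 0 = 0`), the expected estimation error
satisfies `Σ_x P*(x)·|p(x) − γ(x)| ≤ (1/√2)·√(R(p) − R_min)`. -/
theorem binary_cross_entropy_regret_bound
    {X : Type*} [Fintype X] [Nonempty X]
    (Pstar : X → ℝ) (hP0 : ∀ x, 0 ≤ Pstar x) (hP1 : ∑ x, Pstar x = 1)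
    (γ : X → ℝ) (hγ0 : ∀ x, 0 ≤ γ x) (hγ1 : ∀ x, γ x ≤ 1)
    (p : X → ℝ) (hp0 : ∀ x, 0 < p x) (hp1 : ∀ x, p x < 1) :
    ∑ x, Pstar x * |p x - γ x|
      ≤ (1 / Real.sqrt 2) * Real.sqrt
          ((∑ x, Pstar x * (γ x * (-Real.log (p x))
              + (1 - γ x) * (-Real.log (1 - p x))))
            - ∑ x, Pstar x * (γ x * (-Real.log (γ x))
              + (1 - γ x) * (-Real.log (1 - γ x)))) := by
  set reg := (∑ x, Pstar x * (γ x * (-Real.log (p x))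
              + (1 - γ x) * (-Real.log (1 - p x))))
            - ∑ x, Pstar x * (γ x * (-Real.log (γ x))
              + (1 - γ x) * (-Real.log (1 - γ x))) with hreg
  have hregsum : reg = ∑ x, Pstar x * ((γ x * (-Real.log (p x))
              + (1 - γ x) * (-Real.log (1 - p x)))
            - (γ x * (-Real.log (γ x)) + (1 - γ x) * (-Real.log (1 - γ x)))) := by
    rw [hreg, ← Finset.sum_sub_distrib]
    exact Finset.sum_congr rfl fun x _ => by ring
  have hkey : ∑ x, Pstar x * (2 * (p x - γ x)^2) ≤ reg := by
    rw [hregsum]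
    apply Finset.sum_le_sum
    intro x _
    exact mul_le_mul_of_nonneg_left
      (pinsker (γ x) (p x) (hγ0 x) (hγ1 x) (hp0 x) (hp1 x)) (hP0 x)
  have hsq : 0 ≤ ∑ x, Pstar x * (p x - γ x)^2 :=
    Finset.sum_nonneg fun x _ => mul_nonneg (hP0 x) (sq_nonneg _)
  have hd2 : ∑ x, Pstar x * (p x - γ x)^2 ≤ reg / 2 := by
    have : ∑ x, Pstar x * (2 * (p x - γ x)^2)
        = 2 * ∑ x, Pstar x * (p x - γ x)^2 := by
      rw [Finset.mul_sum]; exact Finset.sum_congr rfl fun x _ => by ring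
    linarith [hkey, this ▸ hkey]
  have hreg0 : 0 ≤ reg := by linarith
  -- Cauchy–Schwarz
  have hCS : (∑ x, Pstar x * |p x - γ x|)^2 ≤ ∑ x, Pstar x * (p x - γ x)^2 := by
    have h := Finset.sum_mul_sq_le_sq_mul_sq Finset.univ
      (fun x => Real.sqrt (Pstar x)) (fun x => Real.sqrt (Pstar x) * |p x - γ x|)
    have e1 : ∀ x : X, Real.sqrt (Pstar x) * (Real.sqrt (Pstar x) * |p x - γ x|)
        = Pstar x * |p x - γ x| := fun x => by
      rw [← mul_assoc, Real.mul_self_sqrt (hP0 x)]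
    have e2 : ∀ x : X, (Real.sqrt (Pstar x))^2 = Pstar x := fun x => Real.sq_sqrt (hP0 x)
    have e3 : ∀ x : X, (Real.sqrt (Pstar x) * |p x - γ x|)^2 = Pstar x * (p x - γ x)^2 :=
      fun x => by rw [mul_pow, Real.sq_sqrt (hP0 x), sq_abs]
    simp only [e1, e2, e3] at h
    rwa [hP1, one_mul] at h
  have hL0 : 0 ≤ ∑ x, Pstar x * |p x - γ x| :=
    Finset.sum_nonneg fun x _ => mul_nonneg (hP0 x) (abs_nonneg _)
  calc ∑ x, Pstar x * |p x - γ x|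
      ≤ Real.sqrt (reg / 2) := by
        rw [show (∑ x, Pstar x * |p x - γ x|) = Real.sqrt ((∑ x, Pstar x * |p x - γ x|)^2) from
          (Real.sqrt_sq hL0).symm]
        exact Real.sqrt_le_sqrt (hCS.trans hd2)
    _ = (1 / Real.sqrt 2) * Real.sqrt reg := by
        rw [Real.sqrt_div hreg0]
        ring
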